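/- The localized entropy function H(w) = sup{h_μ(f) : ∫φ dμ = w} is upper semi-continuous on I(φ); since it is also concave on a compact interval, it is continuous on I(φ). -/

import Mathlib

open MeasureTheory
open Filter Topology Set TopologicalSpace NNReal ENNReal

/-- The set of `f`-invariant Borel probability measures. -/
def invP {X : Type*} [TopologicalSpace X] [MeasurableSpace X] (f : X → X) :
    Set (ProbabilityMeasure X) :=
  {μ | (μ : Measure X).map f = (μ : Measure X)}

namespace Stmt7Aux

variable {X : Type*} [MetricSpace X] [CompactSpace X] [MeasurableSpace X] [BorelSpace X]

lemma exists_subseq_tendsto (μs : ℕ → ProbabilityMeasure X) :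
    ∃ (ν : ProbabilityMeasure X) (φ : ℕ → ℕ), StrictMono φ ∧
      Tendsto (fun k => μs (φ k)) atTop (𝓝 ν) := by
  classical
  -- X is nonempty
  have hXne : Nonempty X := by
    by_contra hX
    rw [not_nonempty_iff] at hX
    have h1 : ((μs 0 : Measure X)) univ = 1 := measure_univ
    rw [Set.univ_eq_empty_iff.mpr hX, measure_empty] at h1
    exact zero_ne_one h1
  -- countable basis as a sequence
  obtain ⟨B, hBc, hBne, hB⟩ := exists_countable_basis X
  have hBnonempty : B.Nonempty := by
    obtain ⟨x⟩ := hXne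
    obtain ⟨v, hvB, -, -⟩ := hB.exists_subset_of_mem_open (mem_univ x) isOpen_univ
    exact ⟨v, hvB⟩
  obtain ⟨b, hbB⟩ := hBc.exists_eq_range hBnonempty
  have hbopen : ∀ n, IsOpen (b n) := fun n => hB.isOpen (by rw [hbB]; exact mem_range_self n)
  -- finite unions of basis elements
  set U : Finset ℕ → Set X := fun S => ⋃ n ∈ S, b n with hU
  have hUopen : ∀ S, IsOpen (U S) := fun S => isOpen_biUnion (fun n _ => hbopen n)
  -- refined covering lemma
  have hcov : ∀ (K W : Set X), IsCompact K → IsOpen W → K ⊆ W →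
      ∃ S : Finset ℕ, K ⊆ U S ∧ U S ⊆ W := by
    intro K W hK hW hKW
    have hsub : K ⊆ ⋃ (n : {n // b n ⊆ W}), b n := by
      intro x hx
      obtain ⟨v, hvB, hxv, hvW⟩ := hB.exists_subset_of_mem_open (hKW hx) hW
      rw [hbB] at hvB
      obtain ⟨n, rfl⟩ := hvB
      exact mem_iUnion.2 ⟨⟨n, hvW⟩, hxv⟩
    obtain ⟨T, hT⟩ := hK.elim_finite_subcover (fun n : {n // b n ⊆ W} => b n)
      (fun n => hbopen n) hsub
    refine ⟨T.image Subtype.val, ?_, ?_⟩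
    · intro x hx
      have := hT hx
      simp only [mem_iUnion] at this
      obtain ⟨n, hn, hxn⟩ := this
      simp only [hU, mem_iUnion]
      exact ⟨n.1, Finset.mem_image_of_mem _ hn, hxn⟩
    · intro x hx
      simp only [hU, mem_iUnion, Finset.mem_image] at hx
      obtain ⟨m, ⟨n, hnT, rfl⟩, hxm⟩ := hx
      exact n.2 hxm
  -- ultrafilter extending atTop
  set F : Ultrafilter ℕ := Ultrafilter.of atTop with hF
  have hFle : (F : Filter ℕ) ≤ atTop := Ultrafilter.of_le _
  -- limits along the ultrafilter
  have hclimexists : ∀ S : Finset ℕ, ∃ cS : ℝ≥0,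
      Tendsto (fun n => (μs n) (U S)) (F : Filter ℕ) (𝓝 cS) := by
    intro S
    have hmem : (Ultrafilter.map (fun n => (μs n) (U S)) F : Filter ℝ≥0) ≤ 𝓟 (Icc 0 1) := by
      rw [le_principal_iff, Ultrafilter.mem_coe, Ultrafilter.mem_map]
      have : ∀ n, (μs n) (U S) ∈ Icc (0 : ℝ≥0) 1 :=
        fun n => ⟨zero_le, ProbabilityMeasure.apply_le_one _ _⟩
      exact Filter.univ_mem' this
    obtain ⟨cS, -, hc⟩ := isCompact_Icc.ultrafilter_le_nhds
      (Ultrafilter.map (fun n => (μs n) (U S)) F) hmem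
    exact ⟨cS, hc⟩
  choose c hc using hclimexists
  -- enumeration of Finset ℕ
  obtain ⟨e, he⟩ := exists_surjective_nat (Finset ℕ)
  -- subsequence along which all U S measures converge
  have hfreq : ∀ k : ℕ, ∃ᶠ n in atTop,
      (∀ j ≤ k, dist ((μs n) (U (e j))) (c (e j)) < 1 / (k + 1)) := by
    intro k
    have hpos : (0 : ℝ) < 1 / (k + 1) := by positivity
    have hsets : ∀ j, {n | dist ((μs n) (U (e j))) (c (e j)) < 1 / (k + 1)} ∈ (F : Filter ℕ) := by
      intro j
      exact (Metric.tendsto_nhds.mp (hc (e j)) _ hpos)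
    have hall : {n | ∀ j ≤ k, dist ((μs n) (U (e j))) (c (e j)) < 1 / (k + 1)}
        ∈ (F : Filter ℕ) := by
      have : (⋂ j ∈ Finset.range (k+1),
          {n | dist ((μs n) (U (e j))) (c (e j)) < 1 / (k + 1)}) ∈ (F : Filter ℕ) :=
        (Filter.biInter_finset_mem _).2 (fun j _ => hsets j)
      refine mem_of_superset this ?_
      intro n hn
      simp only [mem_iInter, Finset.mem_range] at hn
      exact fun j hj => hn j (Nat.lt_succ_of_le hj)
    -- frequently in atTop
    rw [Filter.frequently_atTop]
    intro m
    obtain ⟨n, hn1, hn2⟩ := Filter.nonempty_of_mem (inter_mem hall (hFle (Ici_mem_atTop m)))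
    exact ⟨n, hn2, hn1⟩
  obtain ⟨φ, hφmono, hφ⟩ := extraction_forall_of_frequently hfreq
  -- the subsequence converges for each S
  have hconv : ∀ S : Finset ℕ,
      Tendsto (fun k => (μs (φ k)) (U S)) atTop (𝓝 (c S)) := by
    intro S
    obtain ⟨j0, rfl⟩ := he S
    rw [Metric.tendsto_atTop]
    intro ε hε
    obtain ⟨N0, hN0⟩ := exists_nat_gt (1 / ε)
    refine ⟨max j0 N0, fun k hk => ?_⟩
    have h1 : dist ((μs (φ k)) (U (e j0))) (c (e j0)) < 1 / (k + 1) :=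
      hφ k j0 (le_trans (le_max_left _ _) hk)
    have h2 : (1 : ℝ) / (k + 1) < ε := by
      rw [div_lt_iff₀ (by positivity)]
      have hN0k : (N0 : ℝ) ≤ k := by exact_mod_cast le_trans (le_max_right _ _) hk
      have : (1 / ε) < (k : ℝ) + 1 := lt_of_lt_of_le hN0 (by linarith)
      rw [div_lt_iff₀ hε] at this
      linarith
    exact lt_trans h1 h2
  -- elementary (sub)additivity facts at the level of `ℝ≥0`-valued measures
  have coeFn_eq : ∀ (κ : ProbabilityMeasure X) (A : Set X),
      (κ A : ℝ≥0) = ((κ : Measure X) A).toNNReal := fun κ A => rfl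
  have hunion_le : ∀ (n : ℕ) (S1 S2 : Finset ℕ),
      (μs n) (U S1 ∪ U S2) ≤ (μs n) (U S1) + (μs n) (U S2) := by
    intro n S1 S2
    rw [coeFn_eq, coeFn_eq, coeFn_eq,
      ← ENNReal.toNNReal_add (measure_ne_top _ _) (measure_ne_top _ _)]
    exact ENNReal.toNNReal_mono
      (ENNReal.add_ne_top.2 ⟨measure_ne_top _ _, measure_ne_top _ _⟩) (measure_union_le _ _)
  have hdisj : ∀ (n : ℕ) (A B : Set X), Disjoint A B → MeasurableSet B →
      (μs n) A + (μs n) B = (μs n) (A ∪ B) := by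
    intro n A B hAB hB
    rw [coeFn_eq, coeFn_eq, coeFn_eq,
      ← ENNReal.toNNReal_add (measure_ne_top _ _) (measure_ne_top _ _), measure_union hAB hB]
  -- the content obtained as limit of the subsequence
  set lam : Compacts X → ℝ≥0 := fun K => sInf (c '' {S | (K : Set X) ⊆ U S}) with hlamdef
  have hadm : ∀ K : Compacts X, {S | (K : Set X) ⊆ U S}.Nonempty := by
    intro K
    obtain ⟨S, hS, -⟩ := hcov K univ K.2 isOpen_univ (subset_univ _)
    exact ⟨S, hS⟩
  have hlam_le : ∀ (K : Compacts X) (S : Finset ℕ), (K : Set X) ⊆ U S → lam K ≤ c S :=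
    fun K S hS => csInf_le (OrderBot.bddBelow _) ⟨S, hS, rfl⟩
  have hcle1 : ∀ S, c S ≤ 1 :=
    fun S => le_of_tendsto' (hc S) (fun n => ProbabilityMeasure.apply_le_one _ _)
  have hcadd : ∀ S1 S2 : Finset ℕ, c (S1 ∪ S2) ≤ c S1 + c S2 := by
    intro S1 S2
    have hUu : U (S1 ∪ S2) = U S1 ∪ U S2 := Finset.set_biUnion_union _ _ _
    refine le_of_tendsto_of_tendsto' (hc (S1 ∪ S2)) ((hc S1).add (hc S2)) (fun n => ?_)
    rw [hUu]
    exact hunion_le n S1 S2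
  have hlam_mono : ∀ K1 K2 : Compacts X, (K1 : Set X) ⊆ K2 → lam K1 ≤ lam K2 := by
    intro K1 K2 h
    exact csInf_le_csInf (OrderBot.bddBelow _) ((hadm K2).image c)
      (image_mono (fun S hS => h.trans hS))
  have hlam_suple : ∀ K1 K2 : Compacts X, lam (K1 ⊔ K2) ≤ lam K1 + lam K2 := by
    intro K1 K2
    have H : ∀ S1 ∈ {S | (K1 : Set X) ⊆ U S}, ∀ S2 ∈ {S | (K2 : Set X) ⊆ U S},
        lam (K1 ⊔ K2) ≤ c S1 + c S2 := by
      intro S1 h1 S2 h2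
      refine le_trans (hlam_le _ (S1 ∪ S2) ?_) (hcadd S1 S2)
      rw [Compacts.coe_sup]
      have : U (S1 ∪ S2) = U S1 ∪ U S2 := Finset.set_biUnion_union _ _ _
      rw [this]
      exact union_subset_union h1 h2
    have step1 : ∀ S1 ∈ {S | (K1 : Set X) ⊆ U S}, lam (K1 ⊔ K2) ≤ c S1 + lam K2 := by
      intro S1 h1
      rw [← tsub_le_iff_left]
      refine le_csInf ((hadm K2).image c) ?_
      rintro r ⟨S2, h2, rfl⟩
      rw [tsub_le_iff_left]
      exact H S1 h1 S2 h2
    rw [← tsub_le_iff_right]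
    refine le_csInf ((hadm K1).image c) ?_
    rintro r ⟨S1, h1, rfl⟩
    rw [tsub_le_iff_right]
    exact step1 S1 h1
  have hlam_disj : ∀ K1 K2 : Compacts X, Disjoint (K1 : Set X) K2 →
      lam (K1 ⊔ K2) = lam K1 + lam K2 := by
    intro K1 K2 hd
    refine le_antisymm (hlam_suple K1 K2) ?_
    refine le_csInf ((hadm (K1 ⊔ K2)).image c) ?_
    rintro r ⟨S, hS, rfl⟩
    rw [mem_setOf_eq, Compacts.coe_sup] at hS
    obtain ⟨V1, V2, hV1, hV2, hKV1, hKV2, hVd⟩ :=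
      SeparatedNhds.of_isCompact_isCompact K1.2 K2.2 hd
    obtain ⟨S1, hKS1, hS1⟩ := hcov K1 (U S ∩ V1) K1.2 ((hUopen S).inter hV1)
      (subset_inter ((subset_union_left).trans hS) hKV1)
    obtain ⟨S2, hKS2, hS2⟩ := hcov K2 (U S ∩ V2) K2.2 ((hUopen S).inter hV2)
      (subset_inter ((subset_union_right).trans hS) hKV2)
    have hd12 : Disjoint (U S1) (U S2) :=
      hVd.mono (hS1.trans inter_subset_right) (hS2.trans inter_subset_right)
    have hkey : c S1 + c S2 ≤ c S := by
      refine le_of_tendsto_of_tendsto' ((hc S1).add (hc S2)) (hc S) (fun n => ?_)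
      rw [hdisj n (U S1) (U S2) hd12 (hUopen S2).measurableSet]
      exact ProbabilityMeasure.apply_mono _
        (union_subset (hS1.trans inter_subset_left) (hS2.trans inter_subset_left))
    exact le_trans (add_le_add (hlam_le K1 S1 hKS1) (hlam_le K2 S2 hKS2)) hkey
  set Λ : Content X :=
    { toFun := lam
      mono' := hlam_mono
      sup_disjoint' := fun K1 K2 hd _ _ => hlam_disj K1 K2 hd
      sup_le' := hlam_suple } with hΛdef
  have hΛapp : ∀ K : Compacts X, (Λ K : ℝ≥0∞) = (lam K : ℝ≥0∞) := fun K => rfl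
  have hΛuniv : lam ⟨univ, isCompact_univ⟩ = 1 := by
    apply le_antisymm
    · obtain ⟨S, hS⟩ := hadm ⟨univ, isCompact_univ⟩
      exact le_trans (hlam_le _ S hS) (hcle1 S)
    · refine le_csInf ((hadm _).image c) ?_
      rintro r ⟨S, hS, rfl⟩
      have hUS : U S = univ := eq_univ_of_univ_subset hS
      have hone : Tendsto (fun n => (μs n) (U S)) (F : Filter ℕ) (𝓝 1) := by
        simp only [hUS, ProbabilityMeasure.coeFn_univ]
        exact tendsto_const_nhds
      exact (tendsto_nhds_unique (hc S) hone).ge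
  have hmeasopen : ∀ (G : Set X) (hG : IsOpen G),
      Λ.measure G = Λ.innerContent ⟨G, hG⟩ := by
    intro G hG
    rw [Content.measure_apply _ hG.measurableSet, Content.outerMeasure_of_isOpen _ G hG]
  have hprob : IsProbabilityMeasure Λ.measure := by
    constructor
    rw [hmeasopen univ isOpen_univ]
    unfold Content.innerContent
    apply le_antisymm
    · refine iSup_le fun K => iSup_le fun _ => ?_
      rw [hΛapp]
      have h1 : lam K ≤ 1 :=
        le_trans (hlam_mono K ⟨univ, isCompact_univ⟩ (subset_univ _)) (le_of_eq hΛuniv)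
      exact_mod_cast h1
    · have h2 : (1 : ℝ≥0∞) ≤ (Λ (⟨univ, isCompact_univ⟩ : Compacts X) : ℝ≥0∞) := by
        rw [hΛapp, hΛuniv]
        norm_num
      exact le_trans h2 (le_iSup₂_of_le (⟨univ, isCompact_univ⟩ : Compacts X) (subset_univ _) le_rfl)
  set ν : ProbabilityMeasure X := ⟨Λ.measure, hprob⟩ with hνdef
  refine ⟨ν, φ, hφmono, tendsto_of_forall_isOpen_le_liminf ?_⟩
  intro G hG
  set L : ℝ≥0 := atTop.liminf (fun k => (μs (φ k)) G) with hLdef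
  have hbddL : ∀ K : Compacts X, (K : Set X) ⊆ G → lam K ≤ L := by
    intro K hKG
    obtain ⟨S, hKS, hSG⟩ := hcov K G K.2 hG hKG
    refine (hlam_le K S hKS).trans ?_
    have h1 : c S = atTop.liminf (fun k => (μs (φ k)) (U S)) := ((hconv S).liminf_eq).symm
    rw [h1, hLdef]
    refine liminf_le_liminf
      (Eventually.of_forall (fun k => ProbabilityMeasure.apply_mono _ hSG)) ?_ ?_
    · exact Filter.isBoundedUnder_of ⟨0, fun k => zero_le⟩
    · exact Filter.IsBoundedUnder.isCoboundedUnder_ge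
        (Filter.isBoundedUnder_of ⟨1, fun k => ProbabilityMeasure.apply_le_one _ _⟩)
  have hEN : Λ.measure G ≤ (L : ℝ≥0∞) := by
    rw [hmeasopen G hG]
    unfold Content.innerContent
    refine iSup_le fun K => iSup_le fun hK => ?_
    rw [hΛapp]
    exact_mod_cast hbddL K hK
  show ν G ≤ L
  have hshow : (ν G : ℝ≥0) = (Λ.measure G).toNNReal := rfl
  rw [hshow]
  calc (Λ.measure G).toNNReal ≤ ((L : ℝ≥0∞)).toNNReal :=
        ENNReal.toNNReal_mono ENNReal.coe_ne_top hEN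
    _ = L := ENNReal.toNNReal_coe L

lemma compactSpace_probabilityMeasure : CompactSpace (ProbabilityMeasure X) := by
  letI : MetricSpace (ProbabilityMeasure X) := TopologicalSpace.metrizableSpaceMetric _
  refine ⟨IsSeqCompact.isCompact ?_⟩
  intro xs _
  obtain ⟨ν, φ, hφ, hconv⟩ := exists_subseq_tendsto xs
  exact ⟨ν, mem_univ _, φ, hφ, hconv⟩

end Stmt7Aux


/-- The localized entropy function
`H(w) = sup {h_μ(f) : ∫ φ dμ = w}` is upper semi-continuous on
`I(φ) = {∫ φ dμ : μ ∈ M}`; being also concave on this compact interval, it is in fact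
continuous on `I(φ)`.  Here the entropy map `h` is upper semi-continuous (weak*
topology) and affine on the compact convex set `M` of invariant measures. -/
theorem statement7 {X : Type*} [MetricSpace X] [CompactSpace X]
    [MeasurableSpace X] [BorelSpace X]
    (f : X → X) (hf : Continuous f)
    (h : ProbabilityMeasure X → ℝ)
    (husc : UpperSemicontinuousOn h (invP f))
    (haff : ∀ μ ∈ invP f, ∀ ν ∈ invP f, ∀ t : ℝ, 0 ≤ t → t ≤ 1 →
      ∀ σ : ProbabilityMeasure X,
        (σ : Measure X) = ENNReal.ofReal t • (μ : Measure X)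
            + ENNReal.ofReal (1 - t) • (ν : Measure X) →
        h σ = t * h μ + (1 - t) * h ν)
    (hnn : ∀ μ ∈ invP f, 0 ≤ h μ)
    (hbdd : BddAbove (h '' invP f))
    (φ : C(X, ℝ)) :
    UpperSemicontinuousOn
        (fun w => sSup (h '' {μ ∈ invP f | ∫ x, φ x ∂(μ : Measure X) = w}))
        ((fun μ : ProbabilityMeasure X => ∫ x, φ x ∂(μ : Measure X)) '' invP f) ∧
      ContinuousOn
        (fun w => sSup (h '' {μ ∈ invP f | ∫ x, φ x ∂(μ : Measure X) = w}))
        ((fun μ : ProbabilityMeasure X => ∫ x, φ x ∂(μ : Measure X)) '' invP f) := by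
  classical
  haveI : CompactSpace (ProbabilityMeasure X) := Stmt7Aux.compactSpace_probabilityMeasure
  set Φ : ProbabilityMeasure X → ℝ := fun μ => ∫ x, φ x ∂(μ : Measure X) with hΦdef
  set H : ℝ → ℝ := fun w => sSup (h '' {μ ∈ invP f | Φ μ = w}) with hHdef
  set I : Set ℝ := Φ '' invP f with hIdef
  have hΦc : Continuous Φ := by
    rw [continuous_iff_continuousAt]
    intro μ0
    have hcv := ProbabilityMeasure.tendsto_iff_forall_integral_tendsto.mp
      (tendsto_id (x := 𝓝 μ0)) (BoundedContinuousFunction.mkOfCompact φ)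
    simp at hcv; exact hcv
  have hKcl : IsClosed (invP f) := by
    have heq : invP f = {μ : ProbabilityMeasure X |
        ProbabilityMeasure.map μ hf.measurable.aemeasurable = μ} := by
      ext μ
      simp only [invP, mem_setOf_eq]
      exact ⟨fun h' => Subtype.ext h', fun h' => congrArg Subtype.val h'⟩
    rw [heq]
    exact isClosed_eq (ProbabilityMeasure.continuous_map hf) continuous_id
  have hKcpt : IsCompact (invP f) := hKcl.isCompact
  have hIcpt : IsCompact I := hKcpt.image hΦc
  have hfib : ∀ w ∈ I, {μ | μ ∈ invP f ∧ Φ μ = w}.Nonempty := by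
    rintro w ⟨μ, hμ, rfl⟩
    exact ⟨μ, hμ, rfl⟩
  have hbddw : ∀ w, BddAbove (h '' {μ | μ ∈ invP f ∧ Φ μ = w}) :=
    fun w => hbdd.mono (image_mono (fun μ hμ => hμ.1))
  have hHge : ∀ μ, μ ∈ invP f → h μ ≤ H (Φ μ) :=
    fun μ hμ => le_csSup (hbddw _) ⟨μ, ⟨hμ, rfl⟩, rfl⟩
  have hH0 : ∀ w ∈ I, 0 ≤ H w := by
    rintro w ⟨μ, hμ, rfl⟩
    exact le_trans (hnn μ hμ) (hHge μ hμ)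
  have hHle : ∀ w y, (∀ μ, μ ∈ invP f → Φ μ = w → h μ ≤ y) → w ∈ I → H w ≤ y := by
    intro w y hy hw
    refine csSup_le ((hfib w hw).image h) ?_
    rintro r ⟨μ, ⟨hμ, hΦμ⟩, rfl⟩
    exact hy μ hμ hΦμ
  -- Upper semicontinuity of H on I
  have husc' : UpperSemicontinuousOn H I := by
    intro w hw y hy
    set y' := (H w + y) / 2 with hy'def
    have hy'1 : H w < y' := by rw [hy'def]; linarith
    have hy'2 : y' < y := by rw [hy'def]; linarith
    set S : Set (ProbabilityMeasure X) := {μ | μ ∈ invP f ∧ y' ≤ h μ} with hSdef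
    have hScl : IsClosed S := by
      refine isClosed_of_closure_subset ?_
      intro μ hμc
      have hμK : μ ∈ invP f := hKcl.closure_subset (closure_mono (fun ν hν => hν.1) hμc)
      refine ⟨hμK, ?_⟩
      by_contra hlt
      push_neg at hlt
      have hev := husc μ hμK y' hlt
      have hne : (𝓝[S] μ).NeBot := mem_closure_iff_nhdsWithin_neBot.mp hμc
      have hle : 𝓝[S] μ ≤ 𝓝[invP f] μ := nhdsWithin_mono μ (fun ν hν => hν.1)
      have h2 : ∀ᶠ ν in 𝓝[S] μ, h ν < y' := hev.filter_mono hle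
      have h3 : ∀ᶠ ν in 𝓝[S] μ, y' ≤ h ν := eventually_nhdsWithin_of_forall (fun ν hν => hν.2)
      obtain ⟨ν, hν1, hν2⟩ := (h2.and h3).exists
      exact absurd hν1 (not_lt.mpr hν2)
    have hCcl : IsClosed (Φ '' S) := ((hScl.isCompact).image hΦc).isClosed
    have hwC : w ∉ Φ '' S := by
      rintro ⟨μ, ⟨hμK, hμy⟩, hΦμ⟩
      have : y' ≤ H w := hΦμ ▸ le_trans hμy (hHge μ hμK)
      exact absurd this (not_le.mpr hy'1)
    have hopen : (Φ '' S)ᶜ ∈ 𝓝 w := hCcl.isOpen_compl.mem_nhds hwC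
    filter_upwards [nhdsWithin_le_nhds hopen, self_mem_nhdsWithin] with x hxC hxI
    have hballx : H x ≤ y' := by
      refine hHle x y' ?_ hxI
      intro μ hμ hΦμ
      by_contra hcon
      push_neg at hcon
      exact hxC ⟨μ, ⟨hμ, le_of_lt hcon⟩, hΦμ⟩
    exact lt_of_le_of_lt hballx hy'2
  -- convex combinations of invariant measures
  have comb : ∀ μ, μ ∈ invP f → ∀ ν, ν ∈ invP f → ∀ t : ℝ, 0 ≤ t → t ≤ 1 →
      ∃ σ, σ ∈ invP f ∧ Φ σ = t * Φ μ + (1 - t) * Φ ν ∧ h σ = t * h μ + (1 - t) * h ν := by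
    intro μ hμ ν hν t ht0 ht1
    have hprob : IsProbabilityMeasure (ENNReal.ofReal t • (μ : Measure X)
        + ENNReal.ofReal (1 - t) • (ν : Measure X)) := by
      constructor
      simp only [Measure.coe_add, Measure.coe_smul, Pi.add_apply, Pi.smul_apply, smul_eq_mul,
        measure_univ, mul_one]
      rw [← ENNReal.ofReal_add ht0 (by linarith)]
      norm_num
    set σ : ProbabilityMeasure X := ⟨_, hprob⟩ with hσdef
    have hσcoe : (σ : Measure X) = ENNReal.ofReal t • (μ : Measure X)
        + ENNReal.ofReal (1 - t) • (ν : Measure X) := rfl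
    refine ⟨σ, ?_, ?_, haff μ hμ ν hν t ht0 ht1 σ hσcoe⟩
    · show (σ : Measure X).map f = (σ : Measure X)
      have hμ' : (μ : Measure X).map f = (μ : Measure X) := hμ
      have hν' : (ν : Measure X).map f = (ν : Measure X) := hν
      rw [hσcoe, Measure.map_add _ _ hf.measurable, Measure.map_smul, Measure.map_smul, hμ', hν']
    · show ∫ x, φ x ∂(σ : Measure X) = _
      have hint : ∀ κ : ProbabilityMeasure X, Integrable (fun x => φ x) (κ : Measure X) := by
        intro κ
        exact BoundedContinuousFunction.integrable (κ : Measure X)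
          (BoundedContinuousFunction.mkOfCompact φ)
      rw [hσcoe, integral_add_measure ((hint μ).smul_measure ENNReal.ofReal_ne_top)
        ((hint ν).smul_measure ENNReal.ofReal_ne_top),
        integral_smul_measure, integral_smul_measure,
        ENNReal.toReal_ofReal ht0, ENNReal.toReal_ofReal (by linarith : (0:ℝ) ≤ 1 - t)]
      simp only [smul_eq_mul, hΦdef]
  -- lower semicontinuity of H on I (from concavity and nonnegativity)
  have hlsc : ∀ w ∈ I, ∀ y, y < H w → ∀ᶠ x in 𝓝[I] w, y < H x := by
    intro w hw y hy
    rcases lt_or_ge y 0 with hy0 | hy0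
    · filter_upwards [self_mem_nhdsWithin] with x hx
      exact lt_of_lt_of_le hy0 (hH0 x hx)
    obtain ⟨r, hrmem, hry⟩ := exists_lt_of_lt_csSup ((hfib w hw).image h) hy
    obtain ⟨μstar, ⟨hμsK, hΦμs⟩, rfl⟩ := hrmem
    have hpos : 0 < h μstar := lt_of_le_of_lt hy0 hry
    set a := sInf I with hadef
    set b := sSup I with hbdef
    have hane : I.Nonempty := ⟨w, hw⟩
    have haI : a ∈ I := hIcpt.sInf_mem hane
    have hbI : b ∈ I := hIcpt.sSup_mem hane
    have hIbdda : ∀ x ∈ I, a ≤ x := fun x hx => csInf_le hIcpt.bddBelow hx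
    have hIbddb : ∀ x ∈ I, x ≤ b := fun x hx => le_csSup hIcpt.bddAbove hx
    have hyh : y / h μstar < 1 := (div_lt_one hpos).mpr hry
    have hyh0 : 0 ≤ y / h μstar := div_nonneg hy0 (le_of_lt hpos)
    set δr : ℝ := if w < b then (b - w) * (1 - y / h μstar) else 1 with hδrdef
    set δl : ℝ := if a < w then (w - a) * (1 - y / h μstar) else 1 with hδldef
    have hδr0 : 0 < δr := by
      rw [hδrdef]
      split
      · exact mul_pos (by linarith) (by linarith)
      · norm_num
    have hδl0 : 0 < δl := by
      rw [hδldef]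
      split
      · exact mul_pos (by linarith) (by linarith)
      · norm_num
    have hδ0 : 0 < min δr δl := lt_min hδr0 hδl0
    have hball : Metric.ball w (min δr δl) ∈ 𝓝 w := Metric.ball_mem_nhds w hδ0
    filter_upwards [nhdsWithin_le_nhds hball, self_mem_nhdsWithin] with x hxb hxI
    rw [Metric.mem_ball, Real.dist_eq] at hxb
    rcases lt_trichotomy x w with hxw | hxw | hxw
    · -- x < w : combine with a fiber over a
      have haw : a < w := lt_of_le_of_lt (hIbdda x hxI) hxw
      have hδlval : δl = (w - a) * (1 - y / h μstar) := by rw [hδldef, if_pos haw]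
      obtain ⟨νa, hνaK, hΦνa⟩ := hfib a haI
      set t := (x - a) / (w - a) with htdef
      have hwa0 : 0 < w - a := sub_pos.2 haw
      have ht0' : 0 ≤ t := div_nonneg (by linarith [hIbdda x hxI]) (le_of_lt hwa0)
      have ht1' : t ≤ 1 := (div_le_one hwa0).mpr (by linarith)
      obtain ⟨σ, hσK, hΦσ, hhσ⟩ := comb μstar hμsK νa hνaK t ht0' ht1'
      have htmul : t * (w - a) = x - a := div_mul_cancel₀ _ (ne_of_gt hwa0)
      have hΦσx : Φ σ = x := by
        rw [hΦσ, hΦμs, hΦνa]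
        linear_combination htmul
      have hHx : t * h μstar + (1 - t) * h νa ≤ H x := by
        have hg := hHge σ hσK
        rw [hΦσx, hhσ] at hg
        exact hg
      have hνa0 : 0 ≤ h νa := hnn νa hνaK
      have hxd : w - x < δl := by
        have h1 : w - x ≤ |x - w| := by rw [abs_sub_comm]; exact le_abs_self _
        exact lt_of_le_of_lt h1 (lt_of_lt_of_le hxb (min_le_right _ _))
      rw [hδlval] at hxd
      have hexpand : (w - a) * (1 - y / h μstar) = (w - a) - (w - a) * (y / h μstar) := by ring
      have h1 : (w - a) * (y / h μstar) < x - a := by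
        rw [hexpand] at hxd
        linarith
      have hq : (y / h μstar) * h μstar = y := div_mul_cancel₀ _ (ne_of_gt hpos)
      have h4 : y / h μstar < t := by
        have h2 : (y / h μstar) * (w - a) < t * (w - a) := by rw [htmul]; linarith
        exact lt_of_mul_lt_mul_right h2 (le_of_lt hwa0)
      have h5 : y < t * h μstar := by
        calc y = (y / h μstar) * h μstar := hq.symm
          _ < t * h μstar := mul_lt_mul_of_pos_right h4 hpos
      have h6 : 0 ≤ (1 - t) * h νa := mul_nonneg (by linarith) hνa0
      linarith
    · rw [hxw]; exact hy
    · -- w < x : combine with b fiber over b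
      have hwb : w < b := lt_of_lt_of_le hxw (hIbddb x hxI)
      have hδrval : δr = (b - w) * (1 - y / h μstar) := by rw [hδrdef, if_pos hwb]
      obtain ⟨νb, hνbK, hΦνb⟩ := hfib b hbI
      set t := (b - x) / (b - w) with htdef
      have hbw0 : 0 < b - w := sub_pos.2 hwb
      have ht0' : 0 ≤ t := div_nonneg (by linarith [hIbddb x hxI]) (le_of_lt hbw0)
      have ht1' : t ≤ 1 := (div_le_one hbw0).mpr (by linarith)
      obtain ⟨σ, hσK, hΦσ, hhσ⟩ := comb μstar hμsK νb hνbK t ht0' ht1'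
      have htmul : t * (b - w) = b - x := div_mul_cancel₀ _ (ne_of_gt hbw0)
      have hΦσx : Φ σ = x := by
        rw [hΦσ, hΦμs, hΦνb]
        linear_combination (-1 : ℝ) * htmul
      have hHx : t * h μstar + (1 - t) * h νb ≤ H x := by
        have hg := hHge σ hσK
        rw [hΦσx, hhσ] at hg
        exact hg
      have hνb0 : 0 ≤ h νb := hnn νb hνbK
      have hxd : x - w < δr := by
        have h1 : x - w ≤ |x - w| := le_abs_self _
        exact lt_of_le_of_lt h1 (lt_of_lt_of_le hxb (min_le_left _ _))
      rw [hδrval] at hxd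
      have hexpand : (b - w) * (1 - y / h μstar) = (b - w) - (b - w) * (y / h μstar) := by ring
      have h1 : (b - w) * (y / h μstar) < b - x := by
        rw [hexpand] at hxd
        linarith
      have hq : (y / h μstar) * h μstar = y := div_mul_cancel₀ _ (ne_of_gt hpos)
      have h4 : y / h μstar < t := by
        have h2 : (y / h μstar) * (b - w) < t * (b - w) := by rw [htmul]; linarith
        exact lt_of_mul_lt_mul_right h2 (le_of_lt hbw0)
      have h5 : y < t * h μstar := by
        calc y = (y / h μstar) * h μstar := hq.symm
          _ < t * h μstar := mul_lt_mul_of_pos_right h4 hpos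
      have h6 : 0 ≤ (1 - t) * h νb := mul_nonneg (by linarith) hνb0
      linarith
  refine ⟨husc', ?_⟩
  intro w hw
  exact tendsto_order.2 ⟨fun y hy => hlsc w hw y hy, fun y hy => husc' w hw y hy⟩
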